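/- arXiv:2209.12283 — 3 statements merged into one kernel-verified Lean document; each statement's English description precedes it below -/
import Mathlib

section
/- Let P and Q be distinct points of the open unit disk B² and let r ≥ 1 be a real number. Then ‖P/r − Q‖ = (r−1)/r holds if and only if d_F(P,Q) = ln r. -/
/-- The Funk distance on the open unit ball of Euclidean n-space:
`d_F(P,Q) = ln((√k − ⟨P, Q−P⟩)/(√k − ⟨Q, Q−P⟩))` with
`k = ⟨P, Q−P⟩² + (1 − ‖P‖²)‖Q−P‖²`. -/
noncomputable def funkDist {n : ℕ} (P Q : EuclideanSpace ℝ (Fin n)) : ℝ :=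
  Real.log
    ((Real.sqrt ((inner ℝ P (Q - P) : ℝ) ^ 2 + (1 - ‖P‖ ^ 2) * ‖Q - P‖ ^ 2) - (inner ℝ P (Q - P) : ℝ)) /
     (Real.sqrt ((inner ℝ P (Q - P) : ℝ) ^ 2 + (1 - ‖P‖ ^ 2) * ‖Q - P‖ ^ 2) - (inner ℝ Q (Q - P) : ℝ)))

/-- `ρ(ε,η) = (1 + sgn(ε−η)·ε)/(1 + sgn(ε−η)·η)`. -/
noncomputable def rho (ε η : ℝ) : ℝ :=
  (1 + Real.sign (ε - η) * ε) / (1 + Real.sign (ε - η) * η)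

/-- The point `(a,b)` of the Euclidean plane. -/
def pt (a b : ℝ) : EuclideanSpace ℝ (Fin 2) := !₂[a, b]

/-- For distinct points `P, Q` of the open unit disk and `r ≥ 1`,
`‖P/r − Q‖ = (r−1)/r` iff `d_F(P,Q) = ln r`. -/
theorem funk_parabola_stmt0 (P Q : EuclideanSpace ℝ (Fin 2))
    (hP : ‖P‖ < 1) (hQ : ‖Q‖ < 1) (hPQ : P ≠ Q) (r : ℝ) (hr : 1 ≤ r) :
    ‖(1 / r) • P - Q‖ = (r - 1) / r ↔ funkDist P Q = Real.log r := by
  have hr0 : (0:ℝ) < r := lt_of_lt_of_le one_pos hr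
  have hu : Q - P ≠ 0 := sub_ne_zero.mpr (Ne.symm hPQ)
  have hun : (0:ℝ) < ‖Q - P‖ := norm_pos_iff.mpr hu
  set p : ℝ := ‖P‖ ^ 2 with hp_def
  set q : ℝ := ‖Q‖ ^ 2 with hq_def
  set s : ℝ := (inner ℝ P Q : ℝ) with hs_def
  set a : ℝ := (inner ℝ P (Q - P) : ℝ) with ha_def
  set b : ℝ := (inner ℝ Q (Q - P) : ℝ) with hb_def
  set k : ℝ := a ^ 2 + (1 - p) * ‖Q - P‖ ^ 2 with hk_def
  have ha : a = s - p := by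
    rw [ha_def, inner_sub_right, hs_def, hp_def, real_inner_self_eq_norm_sq]
  have hb : b = q - s := by
    rw [hb_def, inner_sub_right, hq_def, hs_def, real_inner_self_eq_norm_sq,
      real_inner_comm]
  have hu2 : ‖Q - P‖ ^ 2 = q - 2 * s + p := by
    rw [norm_sub_sq_real, hq_def, hp_def, hs_def, real_inner_comm]
  have hp1 : p < 1 := by
    rw [hp_def]; nlinarith [norm_nonneg P]
  have hq1 : q < 1 := by
    rw [hq_def]; nlinarith [norm_nonneg Q]
  have hu2pos : (0:ℝ) < ‖Q - P‖ ^ 2 := by positivity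
  have hka : a ^ 2 < k := by
    rw [hk_def]; nlinarith
  have hkb : b ^ 2 < k := by
    have : k - b ^ 2 = ‖Q - P‖ ^ 2 * (1 - q) := by
      rw [hk_def, ha, hb, hu2]; ring
    nlinarith
  have hk0 : (0:ℝ) ≤ k := le_of_lt (lt_of_le_of_lt (sq_nonneg a) hka)
  have hsa : a < Real.sqrt k := by
    have h1 : |a| < Real.sqrt k := by
      rw [← Real.sqrt_sq_eq_abs]
      exact Real.sqrt_lt_sqrt (sq_nonneg a) hka
    exact lt_of_le_of_lt (le_abs_self a) h1
  have hsb : b < Real.sqrt k := by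
    have h1 : |b| < Real.sqrt k := by
      rw [← Real.sqrt_sq_eq_abs]
      exact Real.sqrt_lt_sqrt (sq_nonneg b) hkb
    exact lt_of_le_of_lt (le_abs_self b) h1
  have hab : a < b := by
    have : b - a = ‖Q - P‖ ^ 2 := by rw [ha, hb, hu2]; ring
    linarith
  have hdb : (0:ℝ) < Real.sqrt k - b := by linarith
  have hda : (0:ℝ) < Real.sqrt k - a := by linarith
  have hR1 : 1 < (Real.sqrt k - a) / (Real.sqrt k - b) :=
    (one_lt_div hdb).mpr (by linarith)
  have hfd : funkDist P Q = Real.log ((Real.sqrt k - a) / (Real.sqrt k - b)) := rfl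
  -- LHS reduction
  have hVn : ‖(1 / r) • P - Q‖ = (1 / r) * ‖P - r • Q‖ := by
    have h1 : (1 / r) • P - Q = (1 / r) • (P - r • Q) := by
      rw [smul_sub, smul_smul]
      field_simp
      rw [one_smul]
    rw [h1, norm_smul, Real.norm_eq_abs, abs_of_pos (by positivity)]
  have hV2 : ‖P - r • Q‖ ^ 2 = p - 2 * (r * s) + r ^ 2 * q := by
    rw [norm_sub_sq_real, real_inner_smul_right, norm_smul, Real.norm_eq_abs,
      hp_def, hq_def, hs_def, mul_pow, sq_abs]
  have hLHS : ‖(1 / r) • P - Q‖ = (r - 1) / r ↔ ‖P - r • Q‖ = r - 1 := by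
    rw [hVn]
    constructor
    · intro h
      field_simp at h
      linarith [h]
    · intro h; rw [h]; field_simp
  rcases eq_or_lt_of_le hr with h1 | h1
  · -- r = 1
    subst h1
    constructor
    · intro h
      rw [hLHS] at h
      exfalso
      have : ‖P - (1:ℝ) • Q‖ = 0 := by simpa using h
      rw [norm_eq_zero, one_smul, sub_eq_zero] at this
      exact hPQ this
    · intro h
      exfalso
      rw [hfd, Real.log_one] at h
      have := Real.log_pos hR1
      linarith
  · -- r > 1
    rw [hLHS, hfd]
    have hkey : (r * b - a) ^ 2 - (r - 1) ^ 2 * k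
        = ‖Q - P‖ ^ 2 * (‖P - r • Q‖ ^ 2 - (r - 1) ^ 2) := by
      rw [hV2, hk_def, ha, hb, hu2]; ring
    constructor
    · intro h
      -- forward: norm condition ⟹ funk
      have hE : ‖P - r • Q‖ ^ 2 = (r - 1) ^ 2 := by rw [h]
      have hF : (r * b - a) ^ 2 = (r - 1) ^ 2 * k := by
        rw [hE] at hkey; linarith [hkey]
      -- sign: r*b - a ≥ 0 via Cauchy-Schwarz
      have hinner : (inner ℝ (P - r • Q) Q : ℝ) = s - r * q := by
        rw [inner_sub_left, real_inner_smul_left, hs_def, hq_def,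
          real_inner_self_eq_norm_sq]
      have hcs : |(inner ℝ (P - r • Q) Q : ℝ)| ≤ ‖P - r • Q‖ * ‖Q‖ :=
        abs_real_inner_le_norm _ _
      have hcs2 : -( (r - 1) * ‖Q‖) ≤ s - r * q := by
        rw [← hinner]
        have := neg_abs_le ((inner ℝ (P - r • Q) Q : ℝ))
        rw [h] at hcs
        linarith [this, hcs]
      have hrb : r * b - a = (r - 1) ^ 2 + (r - 1) * (s - r * q) := by
        rw [ha, hb, ← hE, hV2]; ring
      have hsign : 0 ≤ r * b - a := by
        have h6 : (r - 1) * ‖Q‖ ≤ (r - 1) * 1 :=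
          mul_le_mul_of_nonneg_left (le_of_lt hQ) (by linarith)
        have h7 : -(r - 1) ≤ s - r * q := by linarith
        have h8 : (r - 1) * (-(r - 1)) ≤ (r - 1) * (s - r * q) :=
          mul_le_mul_of_nonneg_left h7 (by linarith)
        linarith [hrb]
      have heq : r * b - a = (r - 1) * Real.sqrt k := by
        have h2 : r * b - a = Real.sqrt ((r * b - a) ^ 2) :=
          (Real.sqrt_sq hsign).symm
        rw [h2, hF, Real.sqrt_mul (sq_nonneg _), Real.sqrt_sq (by linarith)]
      have hRr : (Real.sqrt k - a) / (Real.sqrt k - b) = r := by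
        rw [div_eq_iff (ne_of_gt hdb)]
        linarith [heq]
      rw [hRr]
    · intro h
      -- backward
      have hRr : (Real.sqrt k - a) / (Real.sqrt k - b) = r := by
        have h2 : Real.log ((Real.sqrt k - a) / (Real.sqrt k - b)) = Real.log r := h
        have := Real.exp_log (div_pos hda hdb)
        have hr' := Real.exp_log hr0
        rw [← this, ← hr', h2]
      have heq : r * b - a = (r - 1) * Real.sqrt k := by
        rw [div_eq_iff (ne_of_gt hdb)] at hRr
        linarith [hRr]
      have hF : (r * b - a) ^ 2 = (r - 1) ^ 2 * k := by
        rw [heq, mul_pow, Real.sq_sqrt hk0]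
      have hE : ‖P - r • Q‖ ^ 2 = (r - 1) ^ 2 := by
        rw [hF] at hkey
        have h3 : ‖Q - P‖ ^ 2 * (‖P - r • Q‖ ^ 2 - (r - 1) ^ 2) = 0 := by linarith
        rcases mul_eq_zero.mp h3 with h4 | h4
        · exact absurd h4 (ne_of_gt hu2pos)
        · linarith
      have : ‖P - r • Q‖ = r - 1 := by
        have h5 : ‖P - r • Q‖ = Real.sqrt (‖P - r • Q‖ ^ 2) :=
          (Real.sqrt_sq (norm_nonneg _)).symm
        rw [h5, hE, Real.sqrt_sq (by linarith)]
      exact this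
end

section
/- Funk parabola of type 2 through the origin: let y₀ ∈ (−1,1) and F = (f₀,g₀) ∈ B² with g₀ ≠ y₀ and F ≠ (0,0). Then the origin belongs to the Funk parabola of type 2, i.e. d_F((0,0),F) = ln ρ(0,y₀), if and only if f₀² + g₀² = y₀²; that is, if and only if the Euclidean distances from F and from the line s: y = y₀ to the origin coincide. -/
/-- The origin lies on the type-2 Funk parabola with focus `F = (f₀,g₀)` and directrix
`y = y₀` iff `f₀² + g₀² = y₀²`, i.e. iff the Euclidean distances from `F` and from the
directrix to the origin coincide. -/
theorem funk_parabola_stmt14 (y₀ f₀ g₀ : ℝ)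
    (hy₀ : -1 < y₀ ∧ y₀ < 1) (hF : ‖pt f₀ g₀‖ < 1) (hgy : g₀ ≠ y₀)
    (hFne : pt f₀ g₀ ≠ pt 0 0) :
    funkDist (pt 0 0) (pt f₀ g₀) = Real.log (rho 0 y₀) ↔ f₀ ^ 2 + g₀ ^ 2 = y₀ ^ 2 := by
  obtain ⟨hy1, hy2⟩ := hy₀
  have h00 : pt 0 0 = 0 := by
    ext i; fin_cases i <;> simp [pt]
  have hQ0 : pt f₀ g₀ ≠ 0 := h00 ▸ hFne
  have hn : 0 < ‖pt f₀ g₀‖ := norm_pos_iff.mpr hQ0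
  have hsq : ‖pt f₀ g₀‖ ^ 2 = f₀ ^ 2 + g₀ ^ 2 := by
    rw [← real_inner_self_eq_norm_sq]
    simp only [pt, PiLp.inner_apply, Fin.sum_univ_two]
    simp [sq]
  have h1n : (0:ℝ) < 1 - ‖pt f₀ g₀‖ := by linarith
  have hL : funkDist (pt 0 0) (pt f₀ g₀) = Real.log (1 / (1 - ‖pt f₀ g₀‖)) := by
    rw [funkDist, h00]
    simp only [inner_zero_left, sub_zero, norm_zero]
    rw [real_inner_self_eq_norm_sq]
    rw [show (0:ℝ) ^ 2 + (1 - 0 ^ 2) * ‖pt f₀ g₀‖ ^ 2 = ‖pt f₀ g₀‖ ^ 2 by ring]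
    rw [Real.sqrt_sq hn.le]
    have hd : ‖pt f₀ g₀‖ - ‖pt f₀ g₀‖ ^ 2 ≠ 0 := by nlinarith
    congr 1
    rw [div_eq_div_iff hd (by linarith)]
    ring
  have habs : |y₀| < 1 := abs_lt.mpr ⟨hy1, hy2⟩
  have h1y : (0:ℝ) < 1 - |y₀| := by linarith
  have hR : rho 0 y₀ = 1 / (1 - |y₀|) := by
    rcases lt_trichotomy y₀ 0 with h | h | h
    · rw [rho, show (0:ℝ) - y₀ = -y₀ by ring, Real.sign_of_pos (by linarith),
        abs_of_neg h]
      norm_num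
    · simp [rho, h]
    · rw [rho, show (0:ℝ) - y₀ = -y₀ by ring, Real.sign_of_neg (by linarith),
        abs_of_pos h]
      ring_nf
  rw [hL, hR]
  constructor
  · intro h
    have := Real.log_injOn_pos (Set.mem_Ioi.mpr (by positivity))
      (Set.mem_Ioi.mpr (by positivity)) h
    have hnn : ‖pt f₀ g₀‖ = |y₀| := by
      field_simp at this
      linarith
    have : ‖pt f₀ g₀‖ ^ 2 = |y₀| ^ 2 := by rw [hnn]
    rw [hsq, sq_abs] at this
    exact this
  · intro h
    have hnn : ‖pt f₀ g₀‖ = |y₀| := by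
      have h2 : ‖pt f₀ g₀‖ ^ 2 = |y₀| ^ 2 := by rw [hsq, sq_abs]; exact h
      exact (sq_eq_sq₀ hn.le (abs_nonneg _)).mp h2
    rw [hnn]
end

section
/- Irreducibility of the quartic defining the Funk parabolas of types 3 and 4: let a, b, c, d be real numbers with c ≠ 0 and d ≠ 0. Then the two-variable polynomial Y⁴ + X²Y² − 2Y³ + a·Y² + b·XY + c·Y + d is irreducible in the polynomial ring ℝ[X,Y]; in particular it admits no factorization as a product of two quadratic polynomials nor as a product of a cubic and a linear polynomial in X and Y. -/
namespace FunkAux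
open Polynomial

lemma keyA (a b c d : ℝ) (hd : d ≠ 0) (r : ℝ[X]) :
    r^4 - 2*r^3 + (X^2 + C a)*r^2 + (C b * X + C c)*r + C d ≠ 0 := by
  intro h
  rcases eq_or_ne r 0 with rfl | hr
  · simp at h
    exact hd (by simpa using h)
  have hlc : r.leadingCoeff ≠ 0 := leadingCoeff_ne_zero.mpr hr
  rcases Nat.eq_zero_or_pos r.natDegree with hn | hn
  · obtain ⟨t, rfl⟩ := natDegree_eq_zero.mp hn
    have h' : C (t^2) * X^2 + C (b*t) * X
        + C (t^4 - 2*t^3 + a*t^2 + c*t + d) = 0 := by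
      simp only [C_add, C_mul, C_sub, C_pow, map_ofNat]
      linear_combination h
    have h2 := congrArg (fun p => Polynomial.coeff p 2) h'
    simp only [coeff_add, coeff_C_mul, coeff_X_pow, coeff_C, coeff_X, coeff_zero] at h2
    norm_num at h2
    exact hr (by simp [h2])
  · -- n ≥ 1 : look at coefficient 4n
    set n := r.natDegree with hndef
    have e1 : (r^4).coeff (4*n) = r.leadingCoeff^4 := by
      rw [← leadingCoeff_pow, ← natDegree_pow]
      rfl
    have e2 : (2*r^3 : ℝ[X]).coeff (4*n) = 0 := by
      apply coeff_eq_zero_of_natDegree_lt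
      calc (2*r^3 : ℝ[X]).natDegree ≤ (2:ℝ[X]).natDegree + (r^3).natDegree := natDegree_mul_le
        _ ≤ 0 + 3*n := by simp [natDegree_pow, ← hndef]
        _ < 4*n := by omega
    have e4 : ((C b * X + C c)*r).coeff (4*n) = 0 := by
      apply coeff_eq_zero_of_natDegree_lt
      calc ((C b * X + C c)*r).natDegree ≤ (C b * X + C c).natDegree + n := natDegree_mul_le
        _ ≤ 1 + n := by
            have : (C b * X + C c).natDegree ≤ 1 := by compute_degree
            omega
        _ < 4*n := by omega
    have e5 : (C d : ℝ[X]).coeff (4*n) = 0 := by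
      rw [coeff_C]; simp; omega
    have hco := congrArg (fun p => Polynomial.coeff p (4*n)) h
    simp only [coeff_add, coeff_sub, e1, e2, e4, e5, coeff_zero] at hco
    rcases eq_or_lt_of_le (show 1 ≤ n from hn) with h1 | h2
    · -- n = 1
      have hn1 : n = 1 := h1.symm
      have e3 : ((X^2 + C a)*r^2).coeff (4*n) = r.leadingCoeff^2 := by
        have hd2 : (X^2 + C a : ℝ[X]).natDegree = 2 := by compute_degree!
        have hl2 : (X^2 + C a : ℝ[X]).leadingCoeff = 1 := by
          rw [leadingCoeff, hd2]
          simp [coeff_X_pow, coeff_C]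
        have : (4*n) = (X^2 + C a : ℝ[X]).natDegree + (r^2).natDegree := by
          rw [hd2, natDegree_pow]; omega
        rw [this, coeff_mul_degree_add_degree, hl2, one_mul, ← leadingCoeff_pow]
      rw [e3] at hco
      have h4 : r.leadingCoeff^2 = 0 := by
        nlinarith [sq_nonneg (r.leadingCoeff^2), sq_nonneg r.leadingCoeff]
      exact hlc (pow_eq_zero_iff two_ne_zero |>.mp h4)
    · -- n ≥ 2
      have e3 : ((X^2 + C a)*r^2).coeff (4*n) = 0 := by
        apply coeff_eq_zero_of_natDegree_lt
        calc ((X^2 + C a)*r^2).natDegree ≤ (X^2 + C a : ℝ[X]).natDegree + (r^2).natDegree :=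
              natDegree_mul_le
          _ ≤ 2 + 2*n := by
              have : (X^2 + C a : ℝ[X]).natDegree ≤ 2 := by compute_degree
              rw [natDegree_pow]; omega
          _ < 4*n := by omega
      rw [e3] at hco
      simp only [sub_zero, add_zero] at hco
      exact pow_ne_zero 4 hlc hco


lemma keyB (e : ℝ) (u w : ℝ[X]) (hs : u + w = -2) (hp : u * w = X^2 + C e) : False := by
  have h2 : u^2 + 2*u + X^2 + C e = 0 := by
    have hw : w = -2 - u := by linear_combination hs
    rw [hw] at hp
    linear_combination -hp
  rcases Nat.eq_zero_or_pos u.natDegree with hn | hn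
  · obtain ⟨t, rfl⟩ := natDegree_eq_zero.mp hn
    have h' : C (t^2 + 2*t + e) + X^2 = 0 := by
      simp only [C_add, C_mul, C_pow, map_ofNat]
      linear_combination h2
    have h3 := congrArg (fun p => Polynomial.coeff p 2) h'
    simp only [coeff_add, coeff_C, coeff_X_pow, coeff_zero] at h3
    norm_num at h3
  · have hu : u ≠ 0 := fun h0 => by simp [h0] at hn
    have hlc : u.leadingCoeff ≠ 0 := leadingCoeff_ne_zero.mpr hu
    set n := u.natDegree with hndef
    have e1 : (u^2).coeff (2*n) = u.leadingCoeff^2 := by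
      rw [← leadingCoeff_pow, ← natDegree_pow, leadingCoeff]
    have e2 : (2*u : ℝ[X]).coeff (2*n) = 0 := by
      apply coeff_eq_zero_of_natDegree_lt
      calc (2*u : ℝ[X]).natDegree ≤ (2:ℝ[X]).natDegree + n := natDegree_mul_le
        _ < 2*n := by simp; omega
    have e4 : (C e : ℝ[X]).coeff (2*n) = 0 := by rw [coeff_C]; simp; omega
    have hco := congrArg (fun p => Polynomial.coeff p (2*n)) h2
    simp only [coeff_add, e1, e2, e4, coeff_X_pow, coeff_zero, add_zero, zero_add] at hco
    rcases eq_or_lt_of_le (show 1 ≤ n from hn) with h1 | hgt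
    · rw [if_pos (show 2*n = 2 by omega)] at hco
      nlinarith [sq_nonneg u.leadingCoeff]
    · rw [if_neg (show ¬ 2*n = 2 by omega)] at hco
      simp only [add_zero] at hco
      exact hlc (pow_eq_zero_iff two_ne_zero |>.mp hco)

lemma keyQ (a b c d : ℝ) (hd : d ≠ 0) :
    Irreducible (X^4 - C 2 * X^3 + C (X^2 + C a) * X^2 + C (C b * X + C c) * X + C (C d)
      : (ℝ[X])[X]) := by
  set Q : (ℝ[X])[X] :=
    X^4 - C 2 * X^3 + C (X^2 + C a) * X^2 + C (C b * X + C c) * X + C (C d) with hQ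
  have hdeg : Q.natDegree = 4 := by rw [hQ]; compute_degree!
  have hm : Q.Monic := by
    rw [Monic, leadingCoeff, hdeg, hQ]
    simp only [coeff_add, coeff_sub, coeff_C_mul, coeff_X_pow, coeff_C, coeff_X, mul_coeff_zero]
    norm_num
  have hc0 : Q.coeff 0 = C d := by
    rw [hQ]; simp only [coeff_add, coeff_sub, coeff_C_mul, coeff_X_pow, coeff_C, coeff_X]; norm_num
  have hc2 : Q.coeff 2 = X^2 + C a := by
    rw [hQ]; simp only [coeff_add, coeff_sub, coeff_C_mul, coeff_X_pow, coeff_C, coeff_X]; norm_num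
  have hc3 : Q.coeff 3 = -2 := by
    rw [hQ]; simp only [coeff_add, coeff_sub, coeff_C_mul, coeff_X_pow, coeff_C, coeff_X]; norm_num
  rw [hm.irreducible_iff_natDegree']
  constructor
  · intro h1
    have := congrArg natDegree h1
    rw [hdeg, natDegree_one] at this
    exact absurd this (by norm_num)
  · rintro f g hf hg hfg hmem
    rw [hdeg] at hmem
    simp only [Finset.mem_Ioc] at hmem
    have hsum : f.natDegree + g.natDegree = 4 := by
      rw [← hf.natDegree_mul hg, hfg, hdeg]
    obtain ⟨hm1, hm2⟩ := hmem
    have hcase : g.natDegree = 1 ∨ g.natDegree = 2 := by omega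
    rcases hcase with hgd | hgd
    · -- g.natDegree = 1 : linear factor
      have hgeq : g = X + C (g.coeff 0) := hg.eq_X_add_C hgd
      have hev : Q.eval (-(g.coeff 0)) = 0 := by
        rw [← hfg, eval_mul, hgeq]
        simp
      rw [hQ] at hev
      simp only [eval_add, eval_sub, eval_mul, eval_pow, eval_C, eval_X] at hev
      exact keyA a b c d hd (-(g.coeff 0)) (by linear_combination hev)
    · -- g.natDegree = 2, so f.natDegree = 2
      have hfd : f.natDegree = 2 := by omega
      have hf3 : f.coeff 3 = 0 := coeff_eq_zero_of_natDegree_lt (by omega)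
      have hg3 : g.coeff 3 = 0 := coeff_eq_zero_of_natDegree_lt (by omega)
      have hf2 : f.coeff 2 = 1 := by rw [← hfd]; exact hf.coeff_natDegree
      have hg2 : g.coeff 2 = 1 := by rw [← hgd]; exact hg.coeff_natDegree
      have h0 : f.coeff 0 * g.coeff 0 = C d := by
        rw [← hc0, ← hfg, mul_coeff_zero]
      have h3 : f.coeff 1 + g.coeff 1 = -2 := by
        have : (f*g).coeff 3 = Q.coeff 3 := by rw [hfg]
        rw [hc3] at this
        simp only [coeff_mul, Finset.Nat.sum_antidiagonal_eq_sum_range_succ_mk,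
          Finset.sum_range_succ, Finset.sum_range_zero] at this
        simp only [hf3, hg3, hf2, hg2, zero_add, zero_mul, mul_zero, mul_one, one_mul,
          add_zero] at this
        linear_combination this
      have h2 : f.coeff 0 + f.coeff 1 * g.coeff 1 + g.coeff 0 = X^2 + C a := by
        have : (f*g).coeff 2 = Q.coeff 2 := by rw [hfg]
        rw [hc2] at this
        simp only [coeff_mul, Finset.Nat.sum_antidiagonal_eq_sum_range_succ_mk,
          Finset.sum_range_succ, Finset.sum_range_zero] at this
        simp only [hf2, hg2, zero_add, zero_mul, mul_zero, mul_one, one_mul,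
          add_zero] at this
        linear_combination this
      -- f.coeff 0, g.coeff 0 are constants
      have hCd : (C d : ℝ[X]) ≠ 0 := by simpa using hd
      have hfne : f.coeff 0 ≠ 0 := fun h => hCd (by rw [← h0, h, zero_mul])
      have hgne : g.coeff 0 ≠ 0 := fun h => hCd (by rw [← h0, h, mul_zero])
      have hdegs : (f.coeff 0).natDegree + (g.coeff 0).natDegree = 0 := by
        rw [← natDegree_mul hfne hgne, h0, natDegree_C]
      obtain ⟨v0, hv0⟩ := natDegree_eq_zero.mp (by omega : (f.coeff 0).natDegree = 0)
      obtain ⟨z0, hz0⟩ := natDegree_eq_zero.mp (by omega : (g.coeff 0).natDegree = 0)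
      refine keyB (a - v0 - z0) (f.coeff 1) (g.coeff 1) h3 ?_
      rw [C_sub, C_sub]
      linear_combination h2 + hv0 + hz0


noncomputable def funkEquiv : MvPolynomial (Fin 2) ℝ ≃ₐ[ℝ] (Polynomial ℝ)[X] :=
  (MvPolynomial.renameEquiv ℝ (Equiv.swap (0 : Fin 2) 1)).trans
    ((MvPolynomial.finSuccEquiv ℝ 1).trans
      (Polynomial.mapAlgEquiv ((MvPolynomial.finSuccEquiv ℝ 0).trans
        (Polynomial.mapAlgEquiv (MvPolynomial.isEmptyAlgEquiv ℝ (Fin 0))))))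

lemma funkEquiv_X1 : funkEquiv (MvPolynomial.X 1) = (X : (ℝ[X])[X]) := by
  rw [funkEquiv]
  simp only [AlgEquiv.trans_apply, MvPolynomial.renameEquiv_apply, MvPolynomial.rename_X,
    Equiv.swap_apply_right, MvPolynomial.finSuccEquiv_X_zero, Polynomial.coe_mapAlgEquiv,
    Polynomial.map_X]

lemma funkEquiv_X0 : funkEquiv (MvPolynomial.X 0) = (C X : (ℝ[X])[X]) := by
  have h1 : (1 : Fin 2) = Fin.succ 0 := rfl
  rw [funkEquiv]
  simp only [AlgEquiv.trans_apply, MvPolynomial.renameEquiv_apply, MvPolynomial.rename_X,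
    Equiv.swap_apply_left, h1, MvPolynomial.finSuccEquiv_X_succ, Polynomial.coe_mapAlgEquiv,
    Polynomial.map_C, MvPolynomial.finSuccEquiv_X_zero, Polynomial.map_X, AlgEquiv.coe_trans,
    Function.comp_apply]
  congr 1
  simp [MvPolynomial.finSuccEquiv_X_zero, Polynomial.coe_mapAlgEquiv]

lemma funkEquiv_C (r : ℝ) : funkEquiv (MvPolynomial.C r) = (C (C r) : (ℝ[X])[X]) := by
  have : MvPolynomial.C r = algebraMap ℝ (MvPolynomial (Fin 2) ℝ) r := rfl
  rw [this, AlgEquiv.commutes, Polynomial.algebraMap_apply, Polynomial.algebraMap_apply]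
  simp

end FunkAux

open MvPolynomial

/-- Irreducibility of the quartic defining the Funk parabolas of types 3 and 4:
for real `a, b, c, d` with `c ≠ 0` and `d ≠ 0`, the polynomial
`Y⁴ + X²Y² − 2Y³ + aY² + bXY + cY + d` is irreducible in `ℝ[X,Y]`
(here `X = MvPolynomial.X 0`, `Y = MvPolynomial.X 1`); in particular it is neither a
product of two quadratics nor a product of a cubic and a linear polynomial. -/
theorem funk_parabola_stmt17 (a b c d : ℝ) (hc : c ≠ 0) (hd : d ≠ 0) :
    Irreducible
      ((X 1) ^ 4 + (X 0) ^ 2 * (X 1) ^ 2 - 2 * (X 1) ^ 3 + C a * (X 1) ^ 2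
        + C b * (X 0) * (X 1) + C c * (X 1) + C d : MvPolynomial (Fin 2) ℝ) := by
  rw [← MulEquiv.irreducible_iff FunkAux.funkEquiv]
  have h2 : FunkAux.funkEquiv ((X 1) ^ 4 + (X 0) ^ 2 * (X 1) ^ 2 - 2 * (X 1) ^ 3
        + C a * (X 1) ^ 2 + C b * (X 0) * (X 1) + C c * (X 1) + C d : MvPolynomial (Fin 2) ℝ)
      = (Polynomial.X^4 - Polynomial.C 2 * Polynomial.X^3
          + Polynomial.C (Polynomial.X^2 + Polynomial.C a) * Polynomial.X^2
          + Polynomial.C (Polynomial.C b * Polynomial.X + Polynomial.C c) * Polynomial.X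
          + Polynomial.C (Polynomial.C d) : Polynomial (Polynomial ℝ)) := by
    simp only [map_add, map_sub, map_mul, map_pow, map_ofNat, FunkAux.funkEquiv_X0,
      FunkAux.funkEquiv_X1, FunkAux.funkEquiv_C, Polynomial.C_add, Polynomial.C_mul,
      Polynomial.C_pow]
    ring
  rw [h2]
  exact FunkAux.keyQ a b c d hd
end
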